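/- Let R > 0, s > 3 and c > 0. Let K : ℝ³ × ℝ³ → ℂ be measurable with ‖K(x,y)‖ ≤ c/‖x−y‖ for all x ≠ y, let f : ℝ³ → ℂ be measurable with ‖f(y)‖ ≤ c·(1+‖y‖²)^{−s/2} for all y, and let ψ : ℝ³ → ℂ be measurable with ‖ψ‖_{0,−s} < ∞. Then there exists a constant C > 0 (depending only on c, s, R) such that for every x ∈ ℝ³, ‖∫_{{y : ‖y‖ > R}} K(x,y) f(y) ψ(y) dy‖ ≤ C·‖ψ‖_{0,−s}/(1+‖x‖). (Lemma 4.2 of the paper.) -/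

import Mathlib

open MeasureTheory Metric
open scoped ENNReal

noncomputable abbrev E3 : Type := EuclideanSpace ℝ (Fin 3)

/-- The weighted norm `‖ψ‖_{0,-s} = (∫ (1+‖y‖²)^{-s/2} ‖ψ(y)‖² dy)^{1/2}`. -/
noncomputable def weightedNorm (s : ℝ) (ψ : E3 → ℂ) : ℝ :=
  (∫ y : E3, (1 + ‖y‖ ^ 2) ^ (-s / 2) * ‖ψ y‖ ^ 2) ^ (1 / 2 : ℝ)

private lemma E3_finrank : ((Module.finrank ℝ E3 : ℝ)) = 3 := by
  rw [finrank_euclideanSpace]; simp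

private lemma rpow_two_eq (a : ℝ) : a ^ (2 : ℝ) = a ^ 2 := by
  rw [show (2 : ℝ) = ((2 : ℕ) : ℝ) by norm_num, Real.rpow_natCast]

/-- The singular part `‖z‖⁻²` is integrable near the origin in dimension 3 (dyadic shells). -/
private lemma lintegral_B1_lt_top :
    ∫⁻ z : E3, ENNReal.ofReal (if ‖z‖ ≤ 1 then 4 * (‖z‖ ^ 2)⁻¹ else 0) < ⊤ := by
  classical
  set Vb : ℝ≥0∞ := volume (closedBall (0 : E3) 1) with hVb
  have hVblt : Vb < ⊤ := measure_closedBall_lt_top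
  set shell : ℕ → Set E3 :=
    fun n => {z : E3 | ‖z‖ ∈ Set.Ioc ((2 : ℝ)⁻¹ ^ (n + 1)) ((2 : ℝ)⁻¹ ^ n)} with hshell
  have hshellm : ∀ n, MeasurableSet (shell n) := fun n =>
    measurable_norm measurableSet_Ioc
  have key : ∀ z : E3, ENNReal.ofReal (if ‖z‖ ≤ 1 then 4 * (‖z‖ ^ 2)⁻¹ else 0)
      ≤ ∑' n : ℕ, (shell n).indicator (fun _ => ENNReal.ofReal (4 * 4 ^ (n + 1))) z := by
    intro z
    by_cases hz1 : ‖z‖ ≤ 1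
    · rcases eq_or_lt_of_le (norm_nonneg z) with hz0 | hzpos
      · simp [if_pos hz1, ← hz0]
      · have hex : ∃ n : ℕ, (2 : ℝ)⁻¹ ^ (n + 1) < ‖z‖ := by
          obtain ⟨n, hn⟩ := exists_pow_lt_of_lt_one hzpos (by norm_num : (2 : ℝ)⁻¹ < 1)
          exact ⟨n, lt_of_le_of_lt
            (pow_le_pow_of_le_one (by norm_num) (by norm_num) (Nat.le_succ n)) hn⟩
        have h1 : (2 : ℝ)⁻¹ ^ (Nat.find hex + 1) < ‖z‖ := Nat.find_spec hex
        have h2 : ‖z‖ ≤ (2 : ℝ)⁻¹ ^ (Nat.find hex) := by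
          rcases Nat.eq_zero_or_pos (Nat.find hex) with h | h
          · rw [h, pow_zero]; exact hz1
          · obtain ⟨k, hk⟩ : ∃ k, Nat.find hex = k + 1 := ⟨Nat.find hex - 1, by omega⟩
            have hmin := Nat.find_min hex (m := k) (by omega)
            rw [hk]
            exact not_lt.mp hmin
        have hmem : z ∈ shell (Nat.find hex) := ⟨h1, h2⟩
        refine le_trans ?_ (ENNReal.le_tsum (Nat.find hex))
        rw [Set.indicator_of_mem hmem, if_pos hz1]
        apply ENNReal.ofReal_le_ofReal
        have hppos : (0 : ℝ) < (2 : ℝ)⁻¹ ^ (Nat.find hex + 1) := by positivity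
        have hsq : ((2 : ℝ)⁻¹ ^ (Nat.find hex + 1)) ^ 2 ≤ ‖z‖ ^ 2 := by nlinarith
        have hinv : (‖z‖ ^ 2)⁻¹ ≤ (((2 : ℝ)⁻¹ ^ (Nat.find hex + 1)) ^ 2)⁻¹ :=
          inv_anti₀ (by positivity) hsq
        have hval : (((2 : ℝ)⁻¹ ^ (Nat.find hex + 1)) ^ 2)⁻¹ = 4 ^ (Nat.find hex + 1) := by
          rw [← pow_mul, inv_pow, inv_inv, show (4 : ℝ) = 2 ^ 2 by norm_num, ← pow_mul,
            Nat.mul_comm]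
        rw [hval] at hinv
        linarith
    · simp [if_neg hz1]
  have hcalc : ∫⁻ z : E3, ENNReal.ofReal (if ‖z‖ ≤ 1 then 4 * (‖z‖ ^ 2)⁻¹ else 0)
      ≤ ∑' n : ℕ, ENNReal.ofReal (4 * 4 ^ (n + 1)) * volume (shell n) := by
    refine le_trans (lintegral_mono key) ?_
    rw [lintegral_tsum fun n => (measurable_const.indicator (hshellm n)).aemeasurable]
    refine le_of_eq (tsum_congr fun n => ?_)
    exact lintegral_indicator_const (hshellm n) _
  have hterm : ∀ n : ℕ, ENNReal.ofReal (4 * 4 ^ (n + 1)) * volume (shell n)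
      ≤ ENNReal.ofReal 16 * (ENNReal.ofReal 2⁻¹) ^ n * Vb := by
    intro n
    have hsub : shell n ⊆ closedBall (0 : E3) ((2 : ℝ)⁻¹ ^ n) := fun z hz => by
      simpa [mem_closedBall, dist_zero_right] using hz.2
    have hvol : volume (shell n) ≤ ENNReal.ofReal (((2 : ℝ)⁻¹ ^ n) ^ 3) * Vb := by
      calc volume (shell n) ≤ volume (closedBall (0 : E3) ((2 : ℝ)⁻¹ ^ n)) :=
            measure_mono hsub
        _ = ENNReal.ofReal (((2 : ℝ)⁻¹ ^ n) ^ Module.finrank ℝ E3) * volume (ball (0 : E3) 1) :=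
            Measure.addHaar_closedBall _ _ (by positivity)
        _ ≤ ENNReal.ofReal (((2 : ℝ)⁻¹ ^ n) ^ 3) * Vb := by
            rw [show Module.finrank ℝ E3 = 3 by rw [finrank_euclideanSpace]; simp]
            exact mul_le_mul_right (measure_mono ball_subset_closedBall) _
    calc ENNReal.ofReal (4 * 4 ^ (n + 1)) * volume (shell n)
        ≤ ENNReal.ofReal (4 * 4 ^ (n + 1)) * (ENNReal.ofReal (((2 : ℝ)⁻¹ ^ n) ^ 3) * Vb) :=
          mul_le_mul_right hvol _
      _ = ENNReal.ofReal ((4 * 4 ^ (n + 1)) * ((2 : ℝ)⁻¹ ^ n) ^ 3) * Vb := by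
          rw [← mul_assoc, ← ENNReal.ofReal_mul (by positivity)]
      _ = ENNReal.ofReal (16 * (2 : ℝ)⁻¹ ^ n) * Vb := by
          congr 2
          have h8 : (((2 : ℝ)⁻¹) ^ n) ^ 3 = ((8 : ℝ)⁻¹) ^ n := by
            rw [← pow_mul, show (8 : ℝ)⁻¹ = (2 : ℝ)⁻¹ ^ 3 by norm_num, ← pow_mul,
              Nat.mul_comm]
          rw [h8, pow_succ, show (4 : ℝ) * (4 ^ n * 4) * ((8 : ℝ)⁻¹) ^ n
            = 16 * ((4 : ℝ) * (8 : ℝ)⁻¹) ^ n by rw [mul_pow]; ring,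
            show (4 : ℝ) * (8 : ℝ)⁻¹ = 2⁻¹ by norm_num]
      _ = ENNReal.ofReal 16 * (ENNReal.ofReal 2⁻¹) ^ n * Vb := by
          rw [ENNReal.ofReal_mul (by norm_num), ENNReal.ofReal_pow (by norm_num)]
  refine lt_of_le_of_lt (hcalc.trans (ENNReal.tsum_le_tsum hterm)) ?_
  rw [ENNReal.tsum_mul_right, ENNReal.tsum_mul_left, ENNReal.tsum_geometric]
  refine ENNReal.mul_lt_top (ENNReal.mul_lt_top ENNReal.ofReal_lt_top ?_) hVblt
  rw [ENNReal.inv_lt_top, tsub_pos_iff_lt]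
  exact ENNReal.ofReal_lt_one.mpr (by norm_num)

set_option maxHeartbeats 2000000

/-- Lemma 4.2: for a kernel `K` bounded by `c/‖x-y‖`, a density `f` decaying like
`(1+‖y‖²)^{-s/2}` with `s > 3`, and `ψ` with finite weighted norm `‖ψ‖_{0,-s}`,
the potential `∫_{‖y‖>R} K(x,y) f(y) ψ(y) dy` is bounded by `C‖ψ‖_{0,-s}/(1+‖x‖)`,
with `C` depending only on `c`, `s`, `R`. -/
theorem volume_potential_decay_weighted
    (R s c : ℝ) (hR : 0 < R) (hs : 3 < s) (hc : 0 < c) :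
    ∃ C : ℝ, 0 < C ∧
      ∀ (K : E3 × E3 → ℂ), Measurable K →
      (∀ x y : E3, x ≠ y → ‖K (x, y)‖ ≤ c / ‖x - y‖) →
      ∀ (f : E3 → ℂ), Measurable f →
      (∀ y : E3, ‖f y‖ ≤ c * (1 + ‖y‖ ^ 2) ^ (-s / 2)) →
      ∀ (ψ : E3 → ℂ), Measurable ψ →
      Integrable (fun y : E3 => (1 + ‖y‖ ^ 2) ^ (-s / 2) * ‖ψ y‖ ^ 2) →
      ∀ x : E3,
        ‖∫ y in {y : E3 | R < ‖y‖}, K (x, y) * f y * ψ y‖ ≤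
          C * weightedNorm s ψ / (1 + ‖x‖) := by
  classical
  -- exponents
  have hσ3 : 3 < min s 4 := lt_min hs (by norm_num)
  set σ : ℝ := min s 4 with hσdef
  have hσ4 : σ ≤ 4 := min_le_right _ _
  have hσs : σ ≤ s := min_le_left _ _
  have h7σ : (0 : ℝ) < 7 - σ := by linarith
  have hσ1 : (0 : ℝ) < σ - 1 := by linarith
  set p : ℝ := 6 / (7 - σ) with hpdef
  set q : ℝ := 6 / (σ - 1) with hqdef
  have hp0 : 0 < p := by rw [hpdef]; positivity
  have hq0 : 0 < q := by rw [hqdef]; positivity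
  have hpq : Real.HolderConjugate p q := by
    rw [Real.holderConjugate_iff]
    constructor
    · rw [hpdef, lt_div_iff₀ h7σ]; linarith
    · rw [hpdef, hqdef]
      field_simp
      ring
  have hp1 : 1 < p := hpq.lt
  have hq1 : 1 < q := hpq.symm.lt
  have h2p3 : (3 : ℝ) < 2 * p := by
    rw [hpdef, show 2 * (6 / (7 - σ)) = 12 / (7 - σ) by ring, lt_div_iff₀ h7σ]; linarith
  have hq3 : (3 : ℝ) < (σ - 2) * q := by
    rw [hqdef, show (σ - 2) * (6 / (σ - 1)) = 6 * (σ - 2) / (σ - 1) by ring,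
      lt_div_iff₀ hσ1]; linarith
  have hbase : ∀ y : E3, (0 : ℝ) < 1 + ‖y‖ ^ 2 := fun y => by positivity
  have hbase1 : ∀ y : E3, (1 : ℝ) ≤ 1 + ‖y‖ ^ 2 := fun y => by nlinarith [sq_nonneg ‖y‖]
  have hwnn : ∀ y : E3, (0 : ℝ) ≤ (1 + ‖y‖ ^ 2) ^ (-s / 2) := fun y =>
    Real.rpow_nonneg (hbase y).le _
  have hVqnn : ∀ y : E3, (0 : ℝ) ≤ (1 + ‖y‖ ^ 2) ^ (-((σ - 2) * q) / 2) := fun y =>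
    Real.rpow_nonneg (hbase y).le _
  -- the master pointwise inequality
  have hmaster : ∀ x y : E3,
      (1 + ‖x‖) ^ 2 * ((‖x - y‖ ^ 2)⁻¹ * (1 + ‖y‖ ^ 2) ^ (-s / 2))
        ≤ (if ‖x - y‖ ≤ 1 then 4 * (‖x - y‖ ^ 2)⁻¹ else 0)
          + 4 * 2 ^ (2 * p) * (1 + ‖x - y‖) ^ (-(2 * p))
          + (4 * (1 + ‖y‖ ^ 2) ^ (-((σ - 2) * q) / 2)
            + 2 * (1 + ‖y‖ ^ 2) ^ (-s / 2)) := by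
    intro x y
    have ht0 : (0 : ℝ) ≤ ‖x - y‖ := norm_nonneg _
    have hvnn : (0 : ℝ) ≤ (1 + ‖y‖ ^ 2) ^ ((2 - σ) / 2) := Real.rpow_nonneg (hbase y).le _
    have hv1 : (1 + ‖y‖ ^ 2) ^ ((2 - σ) / 2) ≤ 1 :=
      Real.rpow_le_one_of_one_le_of_nonpos (hbase1 y) (by linarith)
    have hvq : ((1 + ‖y‖ ^ 2) ^ ((2 - σ) / 2)) ^ q = (1 + ‖y‖ ^ 2) ^ (-((σ - 2) * q) / 2) := by
      rw [← Real.rpow_mul (hbase y).le]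
      congr 1
      ring
    have hB₂nn : (0 : ℝ) ≤ 4 * 2 ^ (2 * p) * (1 + ‖x - y‖) ^ (-(2 * p)) := by positivity
    have hwv : (1 + ‖y‖) ^ 2 * (1 + ‖y‖ ^ 2) ^ (-s / 2)
        ≤ 2 * (1 + ‖y‖ ^ 2) ^ ((2 - σ) / 2) := by
      have h1 : (1 + ‖y‖) ^ 2 ≤ 2 * (1 + ‖y‖ ^ 2) := by
        nlinarith [sq_nonneg (1 - ‖y‖), norm_nonneg y]
      have h2 : (1 + ‖y‖ ^ 2) ^ (-s / 2) ≤ (1 + ‖y‖ ^ 2) ^ (-σ / 2) :=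
        Real.rpow_le_rpow_of_exponent_le (hbase1 y) (by linarith)
      calc (1 + ‖y‖) ^ 2 * (1 + ‖y‖ ^ 2) ^ (-s / 2)
          ≤ 2 * (1 + ‖y‖ ^ 2) * (1 + ‖y‖ ^ 2) ^ (-σ / 2) :=
            mul_le_mul h1 h2 (hwnn y) (by positivity)
        _ = 2 * ((1 + ‖y‖ ^ 2) ^ (1 : ℝ) * (1 + ‖y‖ ^ 2) ^ (-σ / 2)) := by
            rw [Real.rpow_one]; ring
        _ = 2 * (1 + ‖y‖ ^ 2) ^ ((2 - σ) / 2) := by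
            rw [← Real.rpow_add (hbase y), show (1 : ℝ) + -σ / 2 = (2 - σ) / 2 by ring]
    have hkey : 4 * ((‖x - y‖ ^ 2)⁻¹ * (1 + ‖y‖ ^ 2) ^ ((2 - σ) / 2))
        ≤ (if ‖x - y‖ ≤ 1 then 4 * (‖x - y‖ ^ 2)⁻¹ else 0)
          + 4 * 2 ^ (2 * p) * (1 + ‖x - y‖) ^ (-(2 * p))
          + 4 * (1 + ‖y‖ ^ 2) ^ (-((σ - 2) * q) / 2) := by
      by_cases ht1 : ‖x - y‖ ≤ 1
      · rw [if_pos ht1]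
        have h1 : (‖x - y‖ ^ 2)⁻¹ * (1 + ‖y‖ ^ 2) ^ ((2 - σ) / 2) ≤ (‖x - y‖ ^ 2)⁻¹ := by
          calc (‖x - y‖ ^ 2)⁻¹ * (1 + ‖y‖ ^ 2) ^ ((2 - σ) / 2) ≤ (‖x - y‖ ^ 2)⁻¹ * 1 :=
                mul_le_mul_of_nonneg_left hv1 (by positivity)
            _ = (‖x - y‖ ^ 2)⁻¹ := mul_one _
        have h4 := hVqnn y
        linarith
      · rw [if_neg ht1]
        push_neg at ht1
        have ht0' : (0 : ℝ) < ‖x - y‖ := by linarith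
        have hyoung : (‖x - y‖ ^ 2)⁻¹ * (1 + ‖y‖ ^ 2) ^ ((2 - σ) / 2)
            ≤ ((‖x - y‖ ^ 2)⁻¹) ^ p / p + ((1 + ‖y‖ ^ 2) ^ ((2 - σ) / 2)) ^ q / q :=
          Real.young_inequality_of_nonneg (by positivity) hvnn hpq
        have hd1 : ((‖x - y‖ ^ 2)⁻¹) ^ p / p ≤ ((‖x - y‖ ^ 2)⁻¹) ^ p :=
          div_le_self (Real.rpow_nonneg (by positivity) _) hp1.le
        have hd2 : ((1 + ‖y‖ ^ 2) ^ ((2 - σ) / 2)) ^ q / q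
            ≤ ((1 + ‖y‖ ^ 2) ^ ((2 - σ) / 2)) ^ q :=
          div_le_self (Real.rpow_nonneg hvnn _) hq1.le
        have e1 : ((‖x - y‖ ^ 2)⁻¹ : ℝ) = ‖x - y‖ ^ (-2 : ℝ) := by
          rw [Real.rpow_neg ht0, show (2 : ℝ) = ((2 : ℕ) : ℝ) by norm_num,
            Real.rpow_natCast]
        have e2 : (‖x - y‖ ^ (-2 : ℝ)) ^ p = ‖x - y‖ ^ (-(2 * p)) := by
          rw [← Real.rpow_mul ht0]
          congr 1
          ring
        have e3 : (1 + ‖x - y‖) ^ (2 * p) ≤ 2 ^ (2 * p) * ‖x - y‖ ^ (2 * p) := by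
          have h1 : (1 + ‖x - y‖) ≤ 2 * ‖x - y‖ := by linarith
          calc (1 + ‖x - y‖) ^ (2 * p) ≤ (2 * ‖x - y‖) ^ (2 * p) :=
                Real.rpow_le_rpow (by positivity) h1 (by positivity)
            _ = 2 ^ (2 * p) * ‖x - y‖ ^ (2 * p) := Real.mul_rpow (by norm_num) ht0
        have htp : (0 : ℝ) < ‖x - y‖ ^ (2 * p) := Real.rpow_pos_of_pos ht0' _
        have h1tp : (0 : ℝ) < (1 + ‖x - y‖) ^ (2 * p) := Real.rpow_pos_of_pos (by linarith) _
        have e4 : (‖x - y‖ ^ (2 * p))⁻¹ ≤ 2 ^ (2 * p) * ((1 + ‖x - y‖) ^ (2 * p))⁻¹ := by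
          rw [← div_eq_mul_inv, le_div_iff₀ h1tp, inv_mul_le_iff₀ htp]
          exact e3.trans_eq (mul_comm _ _)
        have e5 : ((‖x - y‖ ^ 2)⁻¹) ^ p ≤ 2 ^ (2 * p) * (1 + ‖x - y‖) ^ (-(2 * p)) := by
          rw [e1, e2, Real.rpow_neg ht0, Real.rpow_neg (by linarith : (0 : ℝ) ≤ 1 + ‖x - y‖)]
          exact e4
        rw [← hvq]
        nlinarith [hyoung, hd1, hd2, e5]
    have htt : ‖x - y‖ ^ 2 * (‖x - y‖ ^ 2)⁻¹ ≤ 1 := by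
      rcases eq_or_ne ‖x - y‖ 0 with h | h
      · simp [h]
      · rw [mul_inv_cancel₀ (pow_ne_zero 2 h)]
    calc (1 + ‖x‖) ^ 2 * ((‖x - y‖ ^ 2)⁻¹ * (1 + ‖y‖ ^ 2) ^ (-s / 2))
        ≤ (2 * (1 + ‖y‖) ^ 2 + 2 * ‖x - y‖ ^ 2)
            * ((‖x - y‖ ^ 2)⁻¹ * (1 + ‖y‖ ^ 2) ^ (-s / 2)) := by
          apply mul_le_mul_of_nonneg_right ?_ (by positivity)
          have h := norm_sub_norm_le x y
          nlinarith [norm_nonneg x, norm_nonneg y, norm_nonneg (x - y),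
            sq_nonneg (1 + ‖y‖ - ‖x - y‖)]
      _ = ((1 + ‖y‖) ^ 2 * (1 + ‖y‖ ^ 2) ^ (-s / 2)) * (2 * (‖x - y‖ ^ 2)⁻¹)
            + 2 * (‖x - y‖ ^ 2 * (‖x - y‖ ^ 2)⁻¹) * (1 + ‖y‖ ^ 2) ^ (-s / 2) := by ring
      _ ≤ (2 * (1 + ‖y‖ ^ 2) ^ ((2 - σ) / 2)) * (2 * (‖x - y‖ ^ 2)⁻¹)
            + 2 * 1 * (1 + ‖y‖ ^ 2) ^ (-s / 2) := by
          apply add_le_add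
          · exact mul_le_mul_of_nonneg_right hwv (by positivity)
          · exact mul_le_mul_of_nonneg_right
              (mul_le_mul_of_nonneg_left htt (by norm_num)) (hwnn y)
      _ = 4 * ((‖x - y‖ ^ 2)⁻¹ * (1 + ‖y‖ ^ 2) ^ ((2 - σ) / 2))
            + 2 * (1 + ‖y‖ ^ 2) ^ (-s / 2) := by ring
      _ ≤ ((if ‖x - y‖ ≤ 1 then 4 * (‖x - y‖ ^ 2)⁻¹ else 0)
            + 4 * 2 ^ (2 * p) * (1 + ‖x - y‖) ^ (-(2 * p))
            + 4 * (1 + ‖y‖ ^ 2) ^ (-((σ - 2) * q) / 2))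
            + 2 * (1 + ‖y‖ ^ 2) ^ (-s / 2) := add_le_add_left hkey _
      _ = _ := by ring
  -- measurability
  have hWc : Continuous fun y : E3 => (1 + ‖y‖ ^ 2 : ℝ) :=
    continuous_const.add (continuous_norm.pow 2)
  have hWm : Measurable fun y : E3 => (1 + ‖y‖ ^ 2) ^ (-s / 2) :=
    (hWc.rpow_const fun y => Or.inl (by positivity)).measurable
  have hVqm : Measurable fun y : E3 => (1 + ‖y‖ ^ 2) ^ (-((σ - 2) * q) / 2) :=
    (hWc.rpow_const fun y => Or.inl (by positivity)).measurable
  have hB₁m : Measurable fun z : E3 => if ‖z‖ ≤ 1 then 4 * (‖z‖ ^ 2)⁻¹ else 0 := by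
    apply Measurable.ite (measurableSet_le measurable_norm measurable_const)
    · exact ((measurable_norm.pow_const 2).inv).const_mul 4
    · exact measurable_const
  have hB₂m : Measurable fun z : E3 => 4 * 2 ^ (2 * p) * (1 + ‖z‖) ^ (-(2 * p)) :=
    ((((continuous_const.add continuous_norm : Continuous fun z : E3 => (1 : ℝ) + ‖z‖).rpow_const
      fun z => Or.inl (by positivity : (1 : ℝ) + ‖z‖ ≠ 0)).measurable)).const_mul _
  have hGm : Measurable fun y : E3 => 4 * (1 + ‖y‖ ^ 2) ^ (-((σ - 2) * q) / 2)
      + 2 * (1 + ‖y‖ ^ 2) ^ (-s / 2) :=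
    (hVqm.const_mul 4).add (hWm.const_mul 2)
  -- integrability of the three pieces
  have hIntB₂ : Integrable (fun z : E3 => 4 * 2 ^ (2 * p) * (1 + ‖z‖) ^ (-(2 * p))) := by
    have h := integrable_one_add_norm (E := E3) (μ := volume) (r := 2 * p)
      (by rw [E3_finrank]; exact h2p3)
    exact h.const_mul _
  have hIntG : Integrable (fun y : E3 => 4 * (1 + ‖y‖ ^ 2) ^ (-((σ - 2) * q) / 2)
      + 2 * (1 + ‖y‖ ^ 2) ^ (-s / 2)) := by
    refine Integrable.add ?_ ?_
    · exact (integrable_rpow_neg_one_add_norm_sq (E := E3) (μ := volume) (r := (σ - 2) * q)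
        (by rw [E3_finrank]; exact hq3)).const_mul 4
    · exact (integrable_rpow_neg_one_add_norm_sq (E := E3) (μ := volume) (r := s)
        (by rw [E3_finrank]; exact hs)).const_mul 2
  -- the total constant
  have hAtop_ne : (∫⁻ z : E3, ENNReal.ofReal (if ‖z‖ ≤ 1 then 4 * (‖z‖ ^ 2)⁻¹ else 0))
      + (∫⁻ z : E3, ENNReal.ofReal (4 * 2 ^ (2 * p) * (1 + ‖z‖) ^ (-(2 * p))))
      + (∫⁻ y : E3, ENNReal.ofReal (4 * (1 + ‖y‖ ^ 2) ^ (-((σ - 2) * q) / 2)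
          + 2 * (1 + ‖y‖ ^ 2) ^ (-s / 2))) ≠ ⊤ := by
    have h1 := lintegral_B1_lt_top
    have h2 := hIntB₂.lintegral_lt_top
    have h3 := hIntG.lintegral_lt_top
    exact (ENNReal.add_lt_top.mpr ⟨ENNReal.add_lt_top.mpr ⟨h1, h2⟩, h3⟩).ne
  set A : ℝ := ((∫⁻ z : E3, ENNReal.ofReal (if ‖z‖ ≤ 1 then 4 * (‖z‖ ^ 2)⁻¹ else 0))
      + (∫⁻ z : E3, ENNReal.ofReal (4 * 2 ^ (2 * p) * (1 + ‖z‖) ^ (-(2 * p))))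
      + (∫⁻ y : E3, ENNReal.ofReal (4 * (1 + ‖y‖ ^ 2) ^ (-((σ - 2) * q) / 2)
          + 2 * (1 + ‖y‖ ^ 2) ^ (-s / 2)))).toReal with hAdef
  have hA0 : 0 ≤ A := ENNReal.toReal_nonneg
  -- the key kernel estimate
  have hT : ∀ x : E3, ENNReal.ofReal ((1 + ‖x‖) ^ 2) *
      (∫⁻ y : E3, ENNReal.ofReal ((‖x - y‖ ^ 2)⁻¹ * (1 + ‖y‖ ^ 2) ^ (-s / 2)))
      ≤ ENNReal.ofReal A := by
    intro x
    have hmm : Measurable fun y : E3 =>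
        ENNReal.ofReal ((‖x - y‖ ^ 2)⁻¹ * (1 + ‖y‖ ^ 2) ^ (-s / 2)) :=
      ((((measurable_const.sub measurable_id).norm.pow_const 2).inv).mul hWm).ennreal_ofReal
    rw [← lintegral_const_mul _ hmm]
    have hle : ∀ y : E3, ENNReal.ofReal ((1 + ‖x‖) ^ 2)
        * ENNReal.ofReal ((‖x - y‖ ^ 2)⁻¹ * (1 + ‖y‖ ^ 2) ^ (-s / 2))
        ≤ ENNReal.ofReal (if ‖x - y‖ ≤ 1 then 4 * (‖x - y‖ ^ 2)⁻¹ else 0)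
          + ENNReal.ofReal (4 * 2 ^ (2 * p) * (1 + ‖x - y‖) ^ (-(2 * p)))
          + ENNReal.ofReal (4 * (1 + ‖y‖ ^ 2) ^ (-((σ - 2) * q) / 2)
            + 2 * (1 + ‖y‖ ^ 2) ^ (-s / 2)) := by
      intro y
      have hnn1 : (0 : ℝ) ≤ if ‖x - y‖ ≤ 1 then 4 * (‖x - y‖ ^ 2)⁻¹ else 0 := by
        split <;> positivity
      have hnn2 : (0 : ℝ) ≤ 4 * 2 ^ (2 * p) * (1 + ‖x - y‖) ^ (-(2 * p)) := by positivity
      have hnn3 : (0 : ℝ) ≤ 4 * (1 + ‖y‖ ^ 2) ^ (-((σ - 2) * q) / 2)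
          + 2 * (1 + ‖y‖ ^ 2) ^ (-s / 2) := by positivity
      rw [← ENNReal.ofReal_mul (by positivity), ← ENNReal.ofReal_add hnn1 hnn2,
        ← ENNReal.ofReal_add (by linarith) hnn3]
      exact ENNReal.ofReal_le_ofReal (hmaster x y)
    refine le_trans (lintegral_mono hle) ?_
    have hsplit : (∫⁻ y : E3, (ENNReal.ofReal (if ‖x - y‖ ≤ 1 then 4 * (‖x - y‖ ^ 2)⁻¹ else 0)
        + ENNReal.ofReal (4 * 2 ^ (2 * p) * (1 + ‖x - y‖) ^ (-(2 * p)))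
        + ENNReal.ofReal (4 * (1 + ‖y‖ ^ 2) ^ (-((σ - 2) * q) / 2)
          + 2 * (1 + ‖y‖ ^ 2) ^ (-s / 2))))
        = (∫⁻ y : E3, ENNReal.ofReal (if ‖x - y‖ ≤ 1 then 4 * (‖x - y‖ ^ 2)⁻¹ else 0))
          + (∫⁻ y : E3, ENNReal.ofReal (4 * 2 ^ (2 * p) * (1 + ‖x - y‖) ^ (-(2 * p))))
          + (∫⁻ y : E3, ENNReal.ofReal (4 * (1 + ‖y‖ ^ 2) ^ (-((σ - 2) * q) / 2)
            + 2 * (1 + ‖y‖ ^ 2) ^ (-s / 2))) := by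
      have m1 : Measurable fun y : E3 =>
          ENNReal.ofReal (if ‖x - y‖ ≤ 1 then 4 * (‖x - y‖ ^ 2)⁻¹ else 0) :=
        (hB₁m.comp (measurable_const.sub measurable_id)).ennreal_ofReal
      have m2 : Measurable fun y : E3 =>
          ENNReal.ofReal (4 * 2 ^ (2 * p) * (1 + ‖x - y‖) ^ (-(2 * p))) :=
        (hB₂m.comp (measurable_const.sub measurable_id)).ennreal_ofReal
      rw [lintegral_add_left (m1.fun_add m2), lintegral_add_left m1]
    rw [hsplit]
    have hsub1 : (∫⁻ y : E3, ENNReal.ofReal (if ‖x - y‖ ≤ 1 then 4 * (‖x - y‖ ^ 2)⁻¹ else 0))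
        = ∫⁻ z : E3, ENNReal.ofReal (if ‖z‖ ≤ 1 then 4 * (‖z‖ ^ 2)⁻¹ else 0) :=
      (Measure.measurePreserving_sub_left volume x).lintegral_comp hB₁m.ennreal_ofReal
    have hsub2 : (∫⁻ y : E3, ENNReal.ofReal (4 * 2 ^ (2 * p) * (1 + ‖x - y‖) ^ (-(2 * p))))
        = ∫⁻ z : E3, ENNReal.ofReal (4 * 2 ^ (2 * p) * (1 + ‖z‖) ^ (-(2 * p))) :=
      (Measure.measurePreserving_sub_left volume x).lintegral_comp hB₂m.ennreal_ofReal
    rw [hsub1, hsub2, hAdef, ENNReal.ofReal_toReal hAtop_ne]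
  -- conclusion
  refine ⟨c ^ 2 * Real.sqrt A + 1, by positivity, ?_⟩
  intro K hKm hKb f hfm hfb ψ hψm hψInt x
  have hx1 : (0 : ℝ) < 1 + ‖x‖ := by positivity
  have hN0 : 0 ≤ weightedNorm s ψ := by
    rw [weightedNorm]
    exact Real.rpow_nonneg (integral_nonneg fun y => by positivity) _
  have hKxm : Measurable fun y : E3 => K (x, y) := hKm.comp measurable_prodMk_left
  have hprodm : Measurable fun y : E3 => K (x, y) * f y * ψ y := (hKxm.mul hfm).mul hψm
  have hFm : Measurable fun y : E3 =>
      ENNReal.ofReal (c ^ 2 * (‖x - y‖⁻¹ * Real.sqrt ((1 + ‖y‖ ^ 2) ^ (-s / 2)))) :=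
    ((((measurable_const.sub measurable_id).norm.inv).mul hWm.sqrt).const_mul
      _).ennreal_ofReal
  have hHm : Measurable fun y : E3 =>
      ENNReal.ofReal (Real.sqrt ((1 + ‖y‖ ^ 2) ^ (-s / 2)) * ‖ψ y‖) :=
    (hWm.sqrt.mul hψm.norm).ennreal_ofReal
  -- step 1/2: from the Bochner integral to a lintegral
  have step1 : ‖∫ y in {y : E3 | R < ‖y‖}, K (x, y) * f y * ψ y‖
      ≤ ∫ y in {y : E3 | R < ‖y‖}, ‖K (x, y) * f y * ψ y‖ :=
    norm_integral_le_integral_norm _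
  have step2 : ∫ y in {y : E3 | R < ‖y‖}, ‖K (x, y) * f y * ψ y‖
      = (∫⁻ y in {y : E3 | R < ‖y‖}, ENNReal.ofReal ‖K (x, y) * f y * ψ y‖).toReal :=
    integral_eq_lintegral_of_nonneg_ae (ae_of_all _ fun y => norm_nonneg _)
      hprodm.norm.aestronglyMeasurable.restrict
  -- step 3: pointwise bound
  have hae : ∀ᵐ y ∂(volume.restrict {y : E3 | R < ‖y‖}), y ≠ x := by
    refine Filter.Eventually.filter_mono (ae_mono Measure.restrict_le_self) ?_
    rw [ae_iff]
    have hset : {a : E3 | ¬a ≠ x} = {x} := by ext a; simp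
    rw [hset]
    exact measure_singleton x
  have step3 : (∫⁻ y in {y : E3 | R < ‖y‖}, ENNReal.ofReal ‖K (x, y) * f y * ψ y‖)
      ≤ ∫⁻ y : E3,
        ((fun y : E3 => ENNReal.ofReal (c ^ 2 * (‖x - y‖⁻¹
            * Real.sqrt ((1 + ‖y‖ ^ 2) ^ (-s / 2)))))
          * fun y : E3 => ENNReal.ofReal (Real.sqrt ((1 + ‖y‖ ^ 2) ^ (-s / 2)) * ‖ψ y‖)) y := by
    refine le_trans (lintegral_mono_ae (hae.mono fun y hy => ?_)) (setLIntegral_le_lintegral _ _)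
    have hK : ‖K (x, y)‖ ≤ c / ‖x - y‖ := hKb x y (Ne.symm hy)
    have hψn : (0 : ℝ) ≤ ‖ψ y‖ := norm_nonneg _
    have hb1 : ‖K (x, y) * f y * ψ y‖ ≤ c / ‖x - y‖ * (c * (1 + ‖y‖ ^ 2) ^ (-s / 2)) * ‖ψ y‖ := by
      rw [norm_mul, norm_mul]
      have h1 : ‖K (x, y)‖ * ‖f y‖ ≤ c / ‖x - y‖ * (c * (1 + ‖y‖ ^ 2) ^ (-s / 2)) :=
        mul_le_mul hK (hfb y) (norm_nonneg _) (by positivity)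
      exact mul_le_mul_of_nonneg_right h1 hψn
    have hb2 : c / ‖x - y‖ * (c * (1 + ‖y‖ ^ 2) ^ (-s / 2)) * ‖ψ y‖
        = (c ^ 2 * (‖x - y‖⁻¹ * Real.sqrt ((1 + ‖y‖ ^ 2) ^ (-s / 2))))
          * (Real.sqrt ((1 + ‖y‖ ^ 2) ^ (-s / 2)) * ‖ψ y‖) := by
      rw [div_eq_mul_inv]
      conv_lhs => rw [← Real.mul_self_sqrt (hwnn y)]
      ring
    calc ENNReal.ofReal ‖K (x, y) * f y * ψ y‖
        ≤ ENNReal.ofReal ((c ^ 2 * (‖x - y‖⁻¹ * Real.sqrt ((1 + ‖y‖ ^ 2) ^ (-s / 2))))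
            * (Real.sqrt ((1 + ‖y‖ ^ 2) ^ (-s / 2)) * ‖ψ y‖)) :=
          ENNReal.ofReal_le_ofReal (hb2 ▸ hb1)
      _ = _ := ENNReal.ofReal_mul (by positivity)
  -- step 4: Cauchy-Schwarz
  have hpq22 : Real.HolderConjugate 2 2 := Real.HolderConjugate.two_two
  have stepCS := ENNReal.lintegral_mul_le_Lp_mul_Lq volume hpq22
    hFm.aemeasurable hHm.aemeasurable
  -- step 5: compute the H factor
  have hH2 : (∫⁻ y : E3,
      ENNReal.ofReal (Real.sqrt ((1 + ‖y‖ ^ 2) ^ (-s / 2)) * ‖ψ y‖) ^ (2 : ℝ))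
      = ENNReal.ofReal (∫ y : E3, (1 + ‖y‖ ^ 2) ^ (-s / 2) * ‖ψ y‖ ^ 2) := by
    rw [ofReal_integral_eq_lintegral_ofReal hψInt (ae_of_all _ fun y => by positivity)]
    refine lintegral_congr fun y => ?_
    rw [ENNReal.ofReal_rpow_of_nonneg (by positivity) (by norm_num), rpow_two_eq,
      mul_pow, Real.sq_sqrt (hwnn y)]
  have hH12 : (∫⁻ y : E3,
      ENNReal.ofReal (Real.sqrt ((1 + ‖y‖ ^ 2) ^ (-s / 2)) * ‖ψ y‖) ^ (2 : ℝ)) ^ (1 / 2 : ℝ)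
      = ENNReal.ofReal (weightedNorm s ψ) := by
    rw [hH2, ENNReal.ofReal_rpow_of_nonneg (integral_nonneg fun y => by positivity)
      (by norm_num), weightedNorm]
  -- step 6: compute and bound the F factor
  have hFsq : ∀ y : E3, (ENNReal.ofReal (c ^ 2 * (‖x - y‖⁻¹
      * Real.sqrt ((1 + ‖y‖ ^ 2) ^ (-s / 2))))) ^ (2 : ℝ)
      = ENNReal.ofReal (c ^ 4)
        * ENNReal.ofReal ((‖x - y‖ ^ 2)⁻¹ * (1 + ‖y‖ ^ 2) ^ (-s / 2)) := by
    intro y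
    rw [← ENNReal.ofReal_mul (by positivity),
      ENNReal.ofReal_rpow_of_nonneg (by positivity) (by norm_num), rpow_two_eq]
    congr 1
    have h1 : (c ^ 2 * (‖x - y‖⁻¹ * Real.sqrt ((1 + ‖y‖ ^ 2) ^ (-s / 2)))) ^ 2
        = c ^ 4 * ((‖x - y‖ ^ 2)⁻¹ * Real.sqrt ((1 + ‖y‖ ^ 2) ^ (-s / 2)) ^ 2) := by
      rw [← inv_pow]; ring
    rw [h1, Real.sq_sqrt (hwnn y)]
  have hmm : Measurable fun y : E3 =>
      ENNReal.ofReal ((‖x - y‖ ^ 2)⁻¹ * (1 + ‖y‖ ^ 2) ^ (-s / 2)) :=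
    ((((measurable_const.sub measurable_id).norm.pow_const 2).inv).mul hWm).ennreal_ofReal
  have hF2eq : (∫⁻ y : E3, (ENNReal.ofReal (c ^ 2 * (‖x - y‖⁻¹
      * Real.sqrt ((1 + ‖y‖ ^ 2) ^ (-s / 2))))) ^ (2 : ℝ))
      = ENNReal.ofReal (c ^ 4)
        * ∫⁻ y : E3, ENNReal.ofReal ((‖x - y‖ ^ 2)⁻¹ * (1 + ‖y‖ ^ 2) ^ (-s / 2)) := by
    rw [lintegral_congr hFsq, lintegral_const_mul _ hmm]
  have hx2 : (0 : ℝ) < (1 + ‖x‖) ^ 2 := by positivity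
  have hT' : (∫⁻ y : E3, (ENNReal.ofReal (c ^ 2 * (‖x - y‖⁻¹
      * Real.sqrt ((1 + ‖y‖ ^ 2) ^ (-s / 2))))) ^ (2 : ℝ))
      ≤ ENNReal.ofReal (c ^ 4 * A / (1 + ‖x‖) ^ 2) := by
    rw [hF2eq, ENNReal.ofReal_div_of_pos hx2, ENNReal.ofReal_mul (by positivity : (0:ℝ) ≤ c ^ 4),
      mul_div_assoc]
    apply mul_le_mul_right
    rw [ENNReal.le_div_iff_mul_le (Or.inl (ENNReal.ofReal_pos.mpr hx2).ne')
      (Or.inl ENNReal.ofReal_ne_top), mul_comm]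
    exact hT x
  have hF12 : (∫⁻ y : E3, (ENNReal.ofReal (c ^ 2 * (‖x - y‖⁻¹
      * Real.sqrt ((1 + ‖y‖ ^ 2) ^ (-s / 2))))) ^ (2 : ℝ)) ^ (1 / 2 : ℝ)
      ≤ ENNReal.ofReal (c ^ 2 * Real.sqrt A / (1 + ‖x‖)) := by
    refine le_trans (ENNReal.rpow_le_rpow hT' (by norm_num)) ?_
    rw [ENNReal.ofReal_rpow_of_nonneg (by positivity) (by norm_num)]
    apply le_of_eq
    congr 1
    have h2 : c ^ 4 * A / (1 + ‖x‖) ^ 2 = (c ^ 2 * Real.sqrt A / (1 + ‖x‖)) ^ 2 := by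
      rw [div_pow, mul_pow, Real.sq_sqrt hA0]; ring
    rw [h2, ← Real.rpow_natCast (c ^ 2 * Real.sqrt A / (1 + ‖x‖)) 2,
      ← Real.rpow_mul (by positivity), show ((2 : ℕ) : ℝ) * (1 / 2 : ℝ) = 1 by norm_num,
      Real.rpow_one]
  -- assembly
  have main : (∫⁻ y in {y : E3 | R < ‖y‖}, ENNReal.ofReal ‖K (x, y) * f y * ψ y‖)
      ≤ ENNReal.ofReal ((c ^ 2 * Real.sqrt A + 1) * weightedNorm s ψ / (1 + ‖x‖)) := by
    refine le_trans step3 (le_trans stepCS ?_)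
    calc (∫⁻ y : E3, (ENNReal.ofReal (c ^ 2 * (‖x - y‖⁻¹
          * Real.sqrt ((1 + ‖y‖ ^ 2) ^ (-s / 2))))) ^ (2 : ℝ)) ^ (1 / 2 : ℝ)
        * (∫⁻ y : E3,
          ENNReal.ofReal (Real.sqrt ((1 + ‖y‖ ^ 2) ^ (-s / 2)) * ‖ψ y‖) ^ (2 : ℝ)) ^ (1 / 2 : ℝ)
        ≤ ENNReal.ofReal (c ^ 2 * Real.sqrt A / (1 + ‖x‖))
            * ENNReal.ofReal (weightedNorm s ψ) := by
          rw [hH12]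
          exact mul_le_mul_left hF12 _
      _ = ENNReal.ofReal (c ^ 2 * Real.sqrt A / (1 + ‖x‖) * weightedNorm s ψ) :=
          (ENNReal.ofReal_mul (by positivity)).symm
      _ ≤ ENNReal.ofReal ((c ^ 2 * Real.sqrt A + 1) * weightedNorm s ψ / (1 + ‖x‖)) := by
          apply ENNReal.ofReal_le_ofReal
          rw [div_mul_eq_mul_div]
          have h1 : c ^ 2 * Real.sqrt A * weightedNorm s ψ
              ≤ (c ^ 2 * Real.sqrt A + 1) * weightedNorm s ψ :=
            mul_le_mul_of_nonneg_right (by linarith [Real.sqrt_nonneg A]) hN0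
          have h2 := mul_le_mul_of_nonneg_right h1 (inv_nonneg.mpr hx1.le)
          simpa [div_eq_mul_inv] using h2
  calc ‖∫ y in {y : E3 | R < ‖y‖}, K (x, y) * f y * ψ y‖
      ≤ ∫ y in {y : E3 | R < ‖y‖}, ‖K (x, y) * f y * ψ y‖ := step1
    _ = (∫⁻ y in {y : E3 | R < ‖y‖}, ENNReal.ofReal ‖K (x, y) * f y * ψ y‖).toReal := step2
    _ ≤ (c ^ 2 * Real.sqrt A + 1) * weightedNorm s ψ / (1 + ‖x‖) :=
        ENNReal.toReal_le_of_le_ofReal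
          (div_nonneg (mul_nonneg (by positivity) hN0) hx1.le) main
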